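/- arXiv:math/0609777 — 6 statements merged into one kernel-verified Lean document; each statement's English description precedes it below -/
import Mathlib

section
/- Let Q = Σ_{n≥0} (B_n/n!) T^n be the exponential generating formal power series of the Bernoulli numbers (with B₁ = −1/2), so that Q = T/(e^T − 1), and for 0 ≤ ℓ ≤ j let a^j_ℓ be the coefficient of T^{j−ℓ} in Q^{j+1}. Then these numbers satisfy the recurrence Σ_{s=1}^{j−ℓ} a^j_{ℓ+s} / s! = a^{j−1}_ℓ for every j ≥ 1 and every ℓ ∈ {0, 1, …, j−1}. -/
open PowerSeries Finset

/-- `a j ℓ` is the coefficient of `T^(j-ℓ)` in `Q^(j+1)`, where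
`Q = Σ_{n≥0} (Bₙ/n!) Tⁿ = T/(eᵀ - 1)` is the Bernoulli generating power series
(with `B₁ = -1/2`). -/
noncomputable def bernCoef (j ℓ : ℕ) : ℚ :=
  PowerSeries.coeff (R := ℚ) (j - ℓ) ((bernoulliPowerSeries ℚ) ^ (j + 1))

/-- The coefficients `a^j_ℓ` satisfy the recurrence
`Σ_{s=1}^{j-ℓ} a^j_{ℓ+s} / s! = a^{j-1}_ℓ` for `j ≥ 1`, `0 ≤ ℓ ≤ j-1`. -/
theorem bernCoef_recurrence (j : ℕ) (hj : 1 ≤ j) (ℓ : ℕ) (hℓ : ℓ < j) :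
    ∑ s ∈ Finset.Icc 1 (j - ℓ), bernCoef j (ℓ + s) / (Nat.factorial s : ℚ)
      = bernCoef (j - 1) ℓ := by
  set Q := bernoulliPowerSeries ℚ with hQ
  set n := j - ℓ with hn
  have hn1 : 1 ≤ n := by omega
  have key : Q ^ (j + 1) * (exp ℚ - 1) = Q ^ j * X := by
    rw [pow_succ, mul_assoc, bernoulliPowerSeries_mul_exp_sub_one]
  have hrhs : bernCoef (j - 1) ℓ = coeff (R := ℚ) n (Q ^ (j + 1) * (exp ℚ - 1)) := by
    rw [key]
    have hne : n = (n - 1) + 1 := by omega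
    rw [hne, coeff_succ_mul_X]
    have hje : j - 1 - ℓ = n - 1 := by omega
    rw [bernCoef, hje]
    congr 2
    omega
  rw [hrhs, coeff_mul]
  rw [Finset.Nat.sum_antidiagonal_eq_sum_range_succ
    (fun a b => coeff (R := ℚ) a (Q ^ (j+1)) * coeff (R := ℚ) b (exp ℚ - 1)) n]
  have hco : ∀ m : ℕ, coeff (R := ℚ) m (exp ℚ - 1)
      = if m = 0 then (0 : ℚ) else 1 / m.factorial := by
    intro m
    rw [map_sub, coeff_exp]
    rcases Nat.eq_zero_or_pos m with h | h
    · simp [h]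
    · rw [if_neg h.ne']
      simp [PowerSeries.coeff_one, h.ne', eq_comm]
  rw [Finset.sum_range_succ]
  simp only [hco, Nat.sub_self, if_pos rfl, if_true, mul_zero, add_zero]
  apply Finset.sum_nbij' (fun s => n - s) (fun k => n - k)
  · intro s hs; simp only [Finset.mem_Icc] at hs; simp; omega
  · intro k hk; simp only [Finset.mem_range] at hk; simp [Finset.mem_Icc]; omega
  · intro s hs; simp only [Finset.mem_Icc] at hs; omega
  · intro k hk; simp only [Finset.mem_range] at hk; omega
  · intro s hs
    simp only [Finset.mem_Icc] at hs
    have h2 : n - (n - s) = s := by omega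
    rw [h2]
    have h3 : j - (ℓ + s) = n - s := by omega
    rw [bernCoef, h3, if_neg (by omega : ¬ s = 0)]
    ring
end

section
/- With a^j_ℓ the coefficient of T^{j−ℓ} in Q^{j+1}, where Q = T/(e^T − 1) is the Bernoulli generating series, one has the boundary values a^j_j = 1 and a^j_0 = (−1)^j for every integer j ≥ 0. -/
open PowerSeries

private lemma derivative_exp_q : d⁄dX ℚ (exp ℚ) = exp ℚ := by
  ext n
  rw [coeff_derivative, coeff_exp, coeff_exp]
  simp only [Algebra.algebraMap_self, RingHom.id_apply]
  have h : ((n + 1).factorial : ℚ) = (n + 1) * n.factorial := by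
    rw [Nat.factorial_succ]; push_cast; ring
  have h0 : (n.factorial : ℚ) ≠ 0 := by positivity
  have h1 : ((n : ℚ) + 1) ≠ 0 := by positivity
  field_simp [h]
  exact h.symm

private lemma key_identity :
    (X : ℚ⟦X⟧) * d⁄dX ℚ (bernoulliPowerSeries ℚ) + (bernoulliPowerSeries ℚ) ^ 2
      + X * bernoulliPowerSeries ℚ = bernoulliPowerSeries ℚ := by
  set Q := bernoulliPowerSeries ℚ with hQdef
  have h1 : Q * (exp ℚ - 1) = X := bernoulliPowerSeries_mul_exp_sub_one ℚ
  have h2 : d⁄dX ℚ Q * (exp ℚ - 1) + Q * exp ℚ = 1 := by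
    have h := congrArg (d⁄dX ℚ) h1
    rw [Derivation.leibniz] at h
    rw [map_sub, derivative_exp_q, Derivation.map_one_eq_zero, derivative_X] at h
    simp only [smul_eq_mul, sub_zero] at h
    linear_combination h
  have h3 : Q * exp ℚ = Q + X := by linear_combination h1
  linear_combination Q * h2 - (d⁄dX ℚ Q) * h1 - Q * h3

private lemma coeff_zero_pow (n : ℕ) :
    PowerSeries.coeff (R := ℚ) 0 ((bernoulliPowerSeries ℚ) ^ n) = 1 := by
  rw [coeff_zero_eq_constantCoeff, map_pow]
  have : constantCoeff (R := ℚ) (bernoulliPowerSeries ℚ) = 1 := by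
    rw [← coeff_zero_eq_constantCoeff]
    simp [bernoulliPowerSeries, coeff_mk]
  rw [this, one_pow]

private lemma recursion (m : ℕ) :
    PowerSeries.coeff (R := ℚ) (m + 1) ((bernoulliPowerSeries ℚ) ^ (m + 2))
      = - PowerSeries.coeff (R := ℚ) m ((bernoulliPowerSeries ℚ) ^ (m + 1)) := by
  set Q := bernoulliPowerSeries ℚ with hQdef
  have hd : d⁄dX ℚ (Q ^ (m + 1)) = (m + 1) • Q ^ m • d⁄dX ℚ Q := by
    simpa using Derivation.leibniz_pow (a := Q) (D := d⁄dX ℚ) (m + 1)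
  have hmain : ((m : ℚ⟦X⟧) + 1) * Q ^ (m + 2)
      = ((m : ℚ⟦X⟧) + 1) * Q ^ (m + 1) - X * d⁄dX ℚ (Q ^ (m + 1))
        - ((m : ℚ⟦X⟧) + 1) * (X * Q ^ (m + 1)) := by
    rw [hd]
    have hk := key_identity
    rw [← hQdef] at hk
    have hQ2 : Q ^ 2 = Q - X * d⁄dX ℚ Q - X * Q := by linear_combination hk
    have hpow : Q ^ (m + 2) = Q ^ m * Q ^ 2 := by ring
    rw [hpow, hQ2]
    simp only [smul_eq_mul, nsmul_eq_mul]
    push_cast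
    ring
  have hc := congrArg (PowerSeries.coeff (R := ℚ) (m + 1)) hmain
  have hcast : ∀ f : ℚ⟦X⟧, PowerSeries.coeff (R := ℚ) (m + 1) (((m : ℚ⟦X⟧) + 1) * f)
      = ((m : ℚ) + 1) * PowerSeries.coeff (R := ℚ) (m + 1) f := by
    intro f
    have : ((m : ℚ⟦X⟧) + 1) = C (R := ℚ) ((m : ℚ) + 1) := by simp
    rw [this, ← smul_eq_C_mul, map_smul, smul_eq_mul]
  rw [map_sub, map_sub, hcast, hcast, hcast, coeff_succ_X_mul, coeff_succ_X_mul,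
    coeff_derivative] at hc
  have hne : ((m : ℚ) + 1) ≠ 0 := by positivity
  apply mul_left_cancel₀ hne
  push_cast at hc ⊢
  linarith

/-- Boundary values: `a^j_j = 1` and `a^j_0 = (-1)^j` for every `j ≥ 0`. -/
theorem bernCoef_boundary (j : ℕ) :
    bernCoef j j = 1 ∧ bernCoef j 0 = (-1 : ℚ) ^ j := by
  constructor
  · rw [bernCoef, Nat.sub_self]
    exact coeff_zero_pow (j + 1)
  · rw [bernCoef, Nat.sub_zero]
    induction j with
    | zero => simpa using coeff_zero_pow 1
    | succ m ih =>
      rw [show m + 1 + 1 = m + 2 from rfl, recursion m, ih]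
      ring
end

section
/- There exists a universal constant c > 0 such that for every integer j ≥ 0 and every ℓ ∈ {0, 1, …, j}, the coefficient a^j_ℓ satisfies |a^j_ℓ| ≤ c^j. -/
open Finset PowerSeries Nat

lemma two_pow_le_fact (n : ℕ) : 2 ^ n ≤ (n + 1)! := by
  induction n with
  | zero => simp
  | succ n ih =>
    rw [pow_succ, Nat.factorial_succ]
    calc 2 ^ n * 2 ≤ (n+1)! * 2 := by omega
    _ ≤ (n + 1 + 1) * (n+1)! := by nlinarith [Nat.one_le_iff_ne_zero.2 (Nat.factorial_ne_zero (n+1))]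

lemma geom_half (n : ℕ) : ∑ i ∈ range n, (1/2 : ℚ) ^ (i + 1) = 1 - (1/2) ^ n := by
  induction n with
  | zero => simp
  | succ n ih => rw [sum_range_succ, ih]; ring

lemma abs_bernoulli_div_le (n : ℕ) : |bernoulli n / (n ! : ℚ)| ≤ 1 := by
  induction n using Nat.strong_induction_on with
  | _ n ih =>
    match n with
    | 0 => norm_num
    | 1 => rw [bernoulli_one]; norm_num [abs_le]
    | (m + 2) =>
      have h := sum_bernoulli (m + 3)
      rw [if_neg (by omega), sum_range_succ] at h
      have hch : ((m+3).choose (m+2) : ℚ) = (m+3 : ℚ) := by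
        rw [Nat.choose_succ_self_right]; push_cast; ring
      rw [hch] at h
      have hB : bernoulli (m+2) = -(∑ k ∈ range (m+2), ((m+3).choose k : ℚ) * bernoulli k) / (m+3 : ℚ) := by
        field_simp
        linarith [h]
      -- bound the sum
      have hk : ∀ k ∈ range (m+2), |((m+3).choose k : ℚ) * bernoulli k|
          ≤ (((m+3)! : ℚ)) * (1/2) ^ (m + 2 - k) := by
        intro k hk
        rw [mem_range] at hk
        have hbk : |bernoulli k| ≤ (k ! : ℚ) := by
          have := ih k (by omega)
          rw [abs_div, div_le_one (by positivity)] at this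
          simpa [abs_of_nonneg (by positivity : (0:ℚ) ≤ (k ! : ℚ))] using this
        have hfac : ((m+3).choose k : ℚ) * (k ! : ℚ) * ((m+3-k)! : ℚ) = ((m+3)! : ℚ) := by
          rw_mod_cast [Nat.choose_mul_factorial_mul_factorial (by omega : k ≤ m+3)]
        have hge : (2:ℚ) ^ (m + 2 - k) ≤ ((m+3-k)! : ℚ) := by
          have := two_pow_le_fact (m + 2 - k)
          have h2 : m + 2 - k + 1 = m + 3 - k := by omega
          rw [h2] at this
          exact_mod_cast this
        rw [abs_mul, abs_of_nonneg (by positivity : (0:ℚ) ≤ ((m+3).choose k : ℚ))]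
        calc ((m+3).choose k : ℚ) * |bernoulli k| ≤ ((m+3).choose k : ℚ) * (k ! : ℚ) :=
              mul_le_mul_of_nonneg_left hbk (by positivity)
          _ = ((m+3)! : ℚ) / ((m+3-k)! : ℚ) := by
              rw [eq_div_iff (by positivity)]; exact hfac
          _ ≤ ((m+3)! : ℚ) * (1/2) ^ (m + 2 - k) := by
              rw [div_le_iff₀ (by positivity)]
              calc ((m+3)! : ℚ) = ((m+3)! : ℚ) * ((1/2)^(m+2-k) * 2^(m+2-k)) := by
                    rw [← mul_pow]; norm_num
                _ ≤ ((m+3)! : ℚ) * (1/2)^(m+2-k) * ((m+3-k)! : ℚ) := by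
                    rw [mul_assoc]
                    exact mul_le_mul_of_nonneg_left
                      (mul_le_mul_of_nonneg_left hge (by positivity)) (by positivity)
      have hsum : |∑ k ∈ range (m+2), ((m+3).choose k : ℚ) * bernoulli k|
          ≤ ((m+3)! : ℚ) := by
        calc |∑ k ∈ range (m+2), ((m+3).choose k : ℚ) * bernoulli k|
            ≤ ∑ k ∈ range (m+2), |((m+3).choose k : ℚ) * bernoulli k| := abs_sum_le_sum_abs _ _
          _ ≤ ∑ k ∈ range (m+2), ((m+3)! : ℚ) * (1/2) ^ (m + 2 - k) := sum_le_sum hk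
          _ = ((m+3)! : ℚ) * ∑ k ∈ range (m+2), (1/2 : ℚ) ^ (m + 2 - k) := by
              rw [mul_sum]
          _ ≤ ((m+3)! : ℚ) * 1 := by
              refine mul_le_mul_of_nonneg_left ?_ (by positivity)
              rw [← Finset.sum_range_reflect]
              have : ∀ k ∈ range (m+2), (1/2:ℚ) ^ (m + 2 - (m + 2 - 1 - k)) = (1/2:ℚ) ^ (k+1) := by
                intro k hk; rw [mem_range] at hk; congr 1; omega
              rw [sum_congr rfl this, geom_half]
              have : (0:ℚ) ≤ (1/2:ℚ)^(m+2) := by positivity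
              linarith
          _ = ((m+3)! : ℚ) := mul_one _
      have h1 : |((m+2)! : ℚ)| = ((m+2)! : ℚ) := abs_of_nonneg (by positivity)
      have h2 : |(m:ℚ)+3| = (m:ℚ)+3 := abs_of_nonneg (by positivity)
      rw [hB, abs_div, abs_div, abs_neg, h1, h2, div_le_one (by positivity),
        div_le_iff₀ (by positivity : (0:ℚ) < (m:ℚ)+3)]
      calc |∑ k ∈ range (m+2), ((m+3).choose k : ℚ) * bernoulli k| ≤ ((m+3)! : ℚ) := hsum
        _ = ((m+2)! : ℚ) * ((m:ℚ)+3) := by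
            rw_mod_cast [Nat.factorial_succ (m+2)]; ring

lemma geom_two (n : ℕ) : ∑ i ∈ range n, (2:ℚ)^i = 2^n - 1 := by
  induction n with
  | zero => simp
  | succ n ih => rw [sum_range_succ, ih]; ring

lemma coeff_bern (n : ℕ) : PowerSeries.coeff (R := ℚ) n (bernoulliPowerSeries ℚ) = bernoulli n / n ! := by
  simp [bernoulliPowerSeries]

lemma pow_bound (k n : ℕ) :
    |PowerSeries.coeff (R := ℚ) n ((bernoulliPowerSeries ℚ) ^ k)| ≤ 2 ^ n * 2 ^ k := by
  induction k generalizing n with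
  | zero =>
    rw [pow_zero, PowerSeries.coeff_one]
    split
    · simp_all
    · simp
  | succ k ih =>
    rw [pow_succ, PowerSeries.coeff_mul]
    calc |∑ p ∈ antidiagonal n, PowerSeries.coeff (R := ℚ) p.1 ((bernoulliPowerSeries ℚ) ^ k) *
            PowerSeries.coeff (R := ℚ) p.2 (bernoulliPowerSeries ℚ)|
        ≤ ∑ p ∈ antidiagonal n, |PowerSeries.coeff (R := ℚ) p.1 ((bernoulliPowerSeries ℚ) ^ k) *
            PowerSeries.coeff (R := ℚ) p.2 (bernoulliPowerSeries ℚ)| := abs_sum_le_sum_abs _ _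
      _ ≤ ∑ p ∈ antidiagonal n, (2:ℚ) ^ p.1 * 2 ^ k := by
          refine sum_le_sum fun p _ => ?_
          rw [abs_mul]
          calc |PowerSeries.coeff (R := ℚ) p.1 ((bernoulliPowerSeries ℚ) ^ k)| *
                |PowerSeries.coeff (R := ℚ) p.2 (bernoulliPowerSeries ℚ)|
              ≤ (2 ^ p.1 * 2 ^ k) * 1 := by
                refine mul_le_mul (ih p.1) ?_ (abs_nonneg _) (by positivity)
                rw [coeff_bern]
                exact abs_bernoulli_div_le p.2
            _ = 2 ^ p.1 * 2 ^ k := mul_one _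
      _ = ∑ i ∈ range (n+1), (2:ℚ) ^ i * 2 ^ k := by
          rw [Finset.Nat.sum_antidiagonal_eq_sum_range_succ_mk]
      _ = (2 ^ (n+1) - 1) * 2 ^ k := by rw [← sum_mul, geom_two]
      _ ≤ 2 ^ n * 2 ^ (k+1) := by
          rw [pow_succ, pow_succ]
          nlinarith [pow_pos (show (0:ℚ)<2 by norm_num) k,
            pow_pos (show (0:ℚ)<2 by norm_num) n]


lemma bernCoef_le (j ℓ : ℕ) (h : ℓ ≤ j) : |bernCoef j ℓ| ≤ 8 ^ j := by
  match j with
  | 0 =>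
    interval_cases ℓ
    simp [bernCoef, coeff_bern]
  | (m + 1) =>
    calc |bernCoef (m+1) ℓ| ≤ 2 ^ (m + 1 - ℓ) * 2 ^ (m + 2) := pow_bound _ _
      _ ≤ 2 ^ (m + 1) * 2 ^ (m + 2) := by
          have : (2:ℚ) ^ (m + 1 - ℓ) ≤ 2 ^ (m + 1) :=
            pow_le_pow_right₀ (by norm_num) (by omega)
          exact mul_le_mul_of_nonneg_right this (by positivity)
      _ ≤ 8 ^ (m + 1) := by
          have hh : (8:ℚ) ^ (m+1) = 2^(m+1) * 2^(m+1) * 2^(m+1) := by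
            rw [← mul_pow, ← mul_pow]; norm_num
          have h2 : (2:ℚ) ≤ 2 ^ (m+1) := by
            calc (2:ℚ) = 2^1 := (pow_one 2).symm
            _ ≤ 2^(m+1) := pow_le_pow_right₀ (by norm_num) (by omega)
          have h3 : (2:ℚ)^(m+2) = 2 * 2^(m+1) := by ring
          rw [hh, h3]
          nlinarith [sq_nonneg ((2:ℚ)^(m+1)), h2]


/-- There is a universal constant `c > 0` with `|a^j_ℓ| ≤ c^j` for all `0 ≤ ℓ ≤ j`. -/
theorem bernCoef_bound :
    ∃ c : ℝ, 0 < c ∧ ∀ j ℓ : ℕ, ℓ ≤ j → |(bernCoef j ℓ : ℝ)| ≤ c ^ j := by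
  refine ⟨8, by norm_num, fun j ℓ h => ?_⟩
  have := bernCoef_le j ℓ h
  calc |(bernCoef j ℓ : ℝ)| = ((|bernCoef j ℓ| : ℚ) : ℝ) := by rw [Rat.cast_abs]
    _ ≤ (((8:ℚ) ^ j : ℚ) : ℝ) := by exact_mod_cast this
    _ = (8:ℝ) ^ j := by push_cast; ring
end

section
/- Fix an integer k ≥ 2 and let a^j_ℓ be the coefficient of T^{j−ℓ} in Q^{j+1}, where Q = T/(e^T − 1). There exists a sequence of real numbers (δ_m)_{m≥0} such that for every integer j ≥ 1 and every ℓ ∈ {1, …, j}: Σ_{h=1}^{j−ℓ} a^j_{ℓ+h} · (−1/k)^h / h! = Σ_{h=1}^{j−ℓ} δ_{j−ℓ−h} · a^{ℓ+h−1}_ℓ. -/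
open PowerSeries Finset

noncomputable def Qs : PowerSeries ℚ := bernoulliPowerSeries ℚ

noncomputable def cc (m r : ℕ) : ℚ := PowerSeries.coeff (R := ℚ) r (Qs ^ m)

lemma derivative_exp' : d⁄dX ℚ (PowerSeries.exp ℚ) = PowerSeries.exp ℚ := by
  ext n
  rw [coeff_derivative, coeff_exp, coeff_exp]
  simp [Nat.factorial_succ]
  field_simp

lemma Q_funct : Qs * (PowerSeries.exp ℚ - 1) = X := bernoulliPowerSeries_mul_exp_sub_one ℚ

lemma XdQ : X * (d⁄dX ℚ Qs) = Qs - Qs^2 - X * Qs := by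
  have e0 := Q_funct
  have e1 : Qs * PowerSeries.exp ℚ + (PowerSeries.exp ℚ - 1) * (d⁄dX ℚ Qs) = 1 := by
    have := congrArg (d⁄dX ℚ) Q_funct
    rw [Derivation.leibniz, map_sub, derivative_exp', Derivation.map_one_eq_zero, derivative_X] at this
    rw [smul_eq_mul, smul_eq_mul, sub_zero] at this
    linear_combination this
  linear_combination Qs * e1 - (d⁄dX ℚ Qs) * e0 - Qs * e0

lemma cc_zero (m : ℕ) : cc m 0 = 1 := by
  simp [cc, Qs, PowerSeries.coeff_zero_eq_constantCoeff, map_pow]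
  simp [bernoulliPowerSeries, constantCoeff_mk]

lemma RR (m s : ℕ) : cc (m+1) (s+1) * ((s:ℚ)+1)
    = ((m:ℚ)+1) * (cc (m+1) (s+1) - cc (m+2) (s+1) - cc (m+1) s) := by
  have hx : X * (d⁄dX ℚ (Qs ^ (m+1)))
      = ((m:ℚ⟦X⟧)+1) * (Qs^(m+1) - Qs^(m+2) - X * Qs^(m+1)) := by
    rw [Derivation.leibniz_pow, Nat.add_sub_cancel, nsmul_eq_mul, smul_eq_mul]
    push_cast
    linear_combination (((m:ℚ⟦X⟧)+1) * Qs^m) * XdQ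
  have hC : ((m:ℚ⟦X⟧)+1) = C ((m:ℚ)+1) := by
    simp [map_natCast]
  rw [hC] at hx
  have h2 := congrArg (PowerSeries.coeff (R := ℚ) (s+1)) hx
  rw [coeff_succ_X_mul, coeff_derivative, coeff_C_mul, map_sub, map_sub,
    coeff_succ_X_mul] at h2
  simpa [cc] using h2

def st : ℕ → ℕ → ℚ
  | 0, 0 => 1
  | 0, _+1 => 0
  | _+1, 0 => 0
  | n+1, p+1 => st n p - n * st n (p+1)

lemma st_zero_succ (p : ℕ) : st 0 (p+1) = 0 := rfl
lemma st_succ_zero (n : ℕ) : st (n+1) 0 = 0 := rfl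
lemma st_succ_succ (n p : ℕ) : st (n+1) (p+1) = st n p - n * st n (p+1) := rfl

lemma st_eq_zero : ∀ n p, n < p → st n p = 0
  | 0, _+1, _ => rfl
  | n+1, p+1, h => by
    rw [st_succ_succ, st_eq_zero n p (by omega), st_eq_zero n (p+1) (by omega)]
    ring

lemma st_self : ∀ n, st n n = 1
  | 0 => rfl
  | n+1 => by
    rw [st_succ_succ, st_self n, st_eq_zero n (n+1) (by omega)]
    ring

noncomputable def ee (n p : ℕ) : ℚ :=
  ∑ m ∈ Finset.Icc p n, (-1)^(n-m) * ((p.factorial : ℚ) / m.factorial) * st m p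

lemma ee_succ (n p : ℕ) (h : p ≤ n) :
    ee (n+1) p = -ee n p + ((p.factorial : ℚ) / (n+1).factorial) * st (n+1) p := by
  rw [ee, Finset.sum_Icc_succ_top (by omega : p ≤ n+1), ee]
  have flip : ∀ m ∈ Finset.Icc p n, (-1:ℚ)^(n+1-m) * ((p.factorial : ℚ) / m.factorial) * st m p
      = -((-1:ℚ)^(n-m) * ((p.factorial : ℚ) / m.factorial) * st m p) := by
    intro m hm
    simp only [Finset.mem_Icc] at hm
    have : n+1-m = (n-m)+1 := by omega
    rw [this, pow_succ]
    ring
  rw [Finset.sum_congr rfl flip, Finset.sum_neg_distrib, Nat.sub_self, pow_zero, one_mul]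

lemma lemS : ∀ n q, q ≤ n →
    ∑ m ∈ Finset.Icc q n, (-1:ℚ)^(n-m) * st m q / m.factorial
      = st (n+1) (q+1) / n.factorial := by
  intro n
  induction n with
  | zero =>
    intro q hq
    interval_cases q
    simp [st_self]
  | succ n ih =>
    intro q hq
    rcases Nat.lt_or_ge q (n+1) with h | h
    · have hq' : q ≤ n := by omega
      rw [Finset.sum_Icc_succ_top (by omega)]
      have flip : ∀ m ∈ Finset.Icc q n, (-1:ℚ)^(n+1-m) * st m q / m.factorial
          = -((-1:ℚ)^(n-m) * st m q / m.factorial) := by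
        intro m hm
        simp only [Finset.mem_Icc] at hm
        have : n+1-m = (n-m)+1 := by omega
        rw [this, pow_succ]
        ring
      rw [Finset.sum_congr rfl flip, Finset.sum_neg_distrib, ih q hq', Nat.sub_self,
        pow_zero, one_mul, st_succ_succ (n+1) q, Nat.factorial_succ]
      have h0 : ((n.factorial : ℚ)) ≠ 0 := Nat.cast_ne_zero.2 (Nat.factorial_ne_zero n)
      push_cast
      field_simp
      ring
    · have : q = n+1 := by omega
      subst this
      simp [st_self, Nat.sub_self]

lemma ee_eq (n q : ℕ) (h : q ≤ n) :
    ee n q = (q.factorial : ℚ) * st (n+1) (q+1) / n.factorial := by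
  have h5 : (q.factorial : ℚ) * st (n+1) (q+1) / n.factorial
      = (q.factorial : ℚ) * (st (n+1) (q+1) / n.factorial) := by ring
  rw [ee, h5, ← lemS n q h, Finset.mul_sum]
  refine Finset.sum_congr rfl fun m hm => ?_
  ring

lemma Mp : ∀ n, ∀ p, p ≤ n → cc (n+1) (n-p) = ee n p := by
  intro n
  induction n with
  | zero =>
    intro p hp
    interval_cases p
    rw [Nat.sub_self, cc_zero, ee]
    simp [st]
  | succ n ih =>
    intro p hp
    rcases Nat.eq_or_lt_of_le hp with he | hlt
    · subst he
      rw [Nat.sub_self, cc_zero, ee]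
      rw [Finset.Icc_self, Finset.sum_singleton, st_self, Nat.sub_self]
      have hf : (((n+1).factorial : ℚ)) ≠ 0 := Nat.cast_ne_zero.2 (Nat.factorial_ne_zero _)
      field_simp
    · have hp' : p ≤ n := by omega
      have hn : ((n:ℚ)+1) ≠ 0 := by positivity
      have key : ((n:ℚ)+1) * cc (n+2) ((n-p)+1)
          = (p:ℚ) * cc (n+1) ((n-p)+1) - ((n:ℚ)+1) * cc (n+1) (n-p) := by
        have h1 := RR n (n-p)
        have hc : ((n-p : ℕ) : ℚ) = (n:ℚ) - p := by
          rw [Nat.cast_sub hp']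
        rw [hc] at h1
        linear_combination h1
      have hidx : n+1-p = (n-p)+1 := by omega
      rw [hidx]
      rcases Nat.eq_zero_or_pos p with h0 | h0
      · subst h0
        have this1 : cc (n+2) ((n-0)+1) = -cc (n+1) (n-0) := by
          apply mul_left_cancel₀ hn
          rw [key]
          push_cast
          ring
        have i5 : cc (n+1) (n-0) = ee n 0 := ih 0 (by omega)
        rw [this1, i5, ee_succ n 0 (by omega), st_succ_zero]
        ring
      · obtain ⟨q, rfl⟩ : ∃ q, p = q+1 := ⟨p-1, by omega⟩
        have hq : q+1 ≤ n := by omega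
        have e2 : (n-(q+1))+1 = n-q := by omega
        rw [e2] at key ⊢
        have i1 : cc (n+1) (n-q) = ee n q := ih q (by omega)
        have i2 : cc (n+1) (n-(q+1)) = ee n (q+1) := ih (q+1) hq
        have i3 : ee (n+1) (q+1) = -ee n (q+1)
            + (((q+1).factorial : ℚ) / (n+1).factorial) * st (n+1) (q+1) :=
          ee_succ n (q+1) hq
        have i4 : ee n q = (q.factorial : ℚ) * st (n+1) (q+1) / n.factorial :=
          ee_eq n q (by omega)
        have hf : ((n.factorial : ℚ)) ≠ 0 := Nat.cast_ne_zero.2 (Nat.factorial_ne_zero n)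
        rw [i1, i2, i4] at key
        rw [i3, Nat.factorial_succ (q), Nat.factorial_succ n]
        apply mul_left_cancel₀ hn
        rw [key]
        push_cast
        field_simp
        ring

def ffp (i : ℕ) (x : ℚ) : ℚ := ∏ q ∈ Finset.range i, (x - q)

lemma st_zero (p : ℕ) : st 0 p = if p = 0 then 1 else 0 := by
  cases p
  · rfl
  · simp [st_zero_succ]

lemma st_poly (x : ℚ) : ∀ i, ∑ p ∈ Finset.range (i+1), st i p * x^p = ffp i x := by
  intro i
  induction i with
  | zero => simp [st, ffp]
  | succ i ih =>
    rw [Finset.sum_range_succ', ffp, Finset.prod_range_succ, ← ffp, ← ih]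
    have expand : ∀ p ∈ Finset.range (i+1), st (i+1) (p+1) * x^(p+1)
        = x * (st i p * x^p) - (i:ℚ) * (st i (p+1) * x^(p+1)) := by
      intro p hp
      rw [st_succ_succ]
      ring
    rw [Finset.sum_congr rfl expand, Finset.sum_sub_distrib, ← Finset.mul_sum, ← Finset.mul_sum]
    have h3 : ∑ p ∈ Finset.range (i+1), st i p * x^p
        = ∑ p ∈ Finset.range (i+2), st i p * x^p := by
      rw [Finset.sum_range_succ (f := fun p => st i p * x^p) (n := i+1),
        st_eq_zero i (i+1) (by omega)]
      simp
    have e2 : ∑ p ∈ Finset.range (i+1), st i (p+1) * x^(p+1)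
        = (∑ p ∈ Finset.range (i+1), st i p * x^p) - st i 0 * x^0 := by
      rw [eq_sub_iff_add_eq, h3,
        Finset.sum_range_succ' (f := fun p => st i p * x^p) (n := i+1)]
    rw [e2, ih]
    rcases i with _ | w
    · simp [st, ffp]
    · simp only [st_succ_zero]
      push_cast
      ring

lemma lemP : ∀ M, ∀ a b : ℕ, ((a+b).choose a : ℚ) * st M (a+b)
    = ∑ u ∈ Finset.range (M+1), (M.choose u : ℚ) * st u a * st (M-u) b := by
  intro M
  induction M with
  | zero =>
    intro a b
    rcases a with _ | a <;> rcases b with _ | b <;>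
      simp [st_zero, Nat.succ_add, st_zero_succ]
  | succ M ih =>
    intro a b
    rcases a with _ | a
    · rw [Finset.sum_eq_single_of_mem 0 (Finset.mem_range.mpr (by omega))]
      · simp [st]
      · intro u hu hne
        obtain ⟨v, rfl⟩ : ∃ v, u = v+1 := ⟨u-1, by omega⟩
        simp [st_succ_zero]
    rcases b with _ | b
    · rw [Finset.sum_eq_single_of_mem (M+1) (Finset.mem_range.mpr (by omega))]
      · simp [st_self, Nat.sub_self, Nat.choose_self]
      · intro u hu hne
        have hu' : u ≤ M := by
          simp only [Finset.mem_range] at hu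
          omega
        obtain ⟨w, hw⟩ : ∃ w, M+1-u = w+1 := ⟨M-u, by omega⟩
        rw [hw, st_succ_zero]
        ring
    -- main case a+1, b+1
    have hpeel : (∑ u ∈ Finset.range (M+2), ((M+1).choose u : ℚ) * st u (a+1) * st (M+1-u) (b+1))
        = ∑ u ∈ Finset.range (M+1), ((M+1).choose (u+1) : ℚ) * st (u+1) (a+1) * st (M-u) (b+1) := by
      rw [Finset.sum_range_succ']
      simp [st_zero_succ]
    have hshift : (∑ u ∈ Finset.range (M+1), (M.choose (u+1) : ℚ) * st (u+1) (a+1) * st (M-u) (b+1))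
        = ∑ u ∈ Finset.range (M+1), (M.choose u : ℚ) * st u (a+1) * st (M+1-u) (b+1) := by
      have h1 := Finset.sum_range_succ' (fun u => (M.choose u : ℚ) * st u (a+1) * st (M+1-u) (b+1)) (M+1)
      have h2 := Finset.sum_range_succ (fun u => (M.choose u : ℚ) * st u (a+1) * st (M+1-u) (b+1)) (M+1)
      simp only [st_zero_succ, Nat.choose_succ_self, Nat.cast_zero, mul_zero, zero_mul,
        add_zero, Nat.succ_sub_succ_eq_sub, Nat.cast_ofNat] at h1 h2
      rw [← h1, h2]
    have step : ∀ u ∈ Finset.range (M+1), ((M+1).choose (u+1):ℚ) * st (u+1) (a+1) * st (M-u) (b+1)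
        = ((M.choose u:ℚ) * st u a * st (M-u) (b+1)
            - (u:ℚ) * ((M.choose u:ℚ) * st u (a+1) * st (M-u) (b+1)))
          + (M.choose (u+1):ℚ) * st (u+1) (a+1) * st (M-u) (b+1) := by
      intro u hu
      have e1 : ((M+1).choose (u+1) : ℚ) = (M.choose u : ℚ) + (M.choose (u+1) : ℚ) := by
        exact_mod_cast congrArg (Nat.cast (R := ℚ)) (Nat.choose_succ_succ M u)
      have e2 := st_succ_succ u a
      linear_combination (st (u+1) (a+1) * st (M-u) (b+1)) * e1
        + ((M.choose u : ℚ) * st (M-u) (b+1)) * e2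
    have step2 : ∀ u ∈ Finset.range (M+1), (M.choose u:ℚ) * st u (a+1) * st (M+1-u) (b+1)
        = (M.choose u:ℚ) * st u (a+1) * st (M-u) b
          - ((M-u:ℕ):ℚ) * ((M.choose u:ℚ) * st u (a+1) * st (M-u) (b+1)) := by
      intro u hu
      have hu' : u ≤ M := by
        simp only [Finset.mem_range] at hu
        omega
      have e4 : M+1-u = (M-u)+1 := by omega
      rw [e4, st_succ_succ]
      ring
    have step3 : (∑ u ∈ Finset.range (M+1), (u:ℚ) * ((M.choose u:ℚ) * st u (a+1) * st (M-u) (b+1)))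
        + (∑ u ∈ Finset.range (M+1), ((M-u:ℕ):ℚ) * ((M.choose u:ℚ) * st u (a+1) * st (M-u) (b+1)))
        = (M:ℚ) * ∑ u ∈ Finset.range (M+1), (M.choose u:ℚ) * st u (a+1) * st (M-u) (b+1) := by
      rw [← Finset.sum_add_distrib, Finset.mul_sum]
      refine Finset.sum_congr rfl fun u hu => ?_
      have hu' : u ≤ M := by
        simp only [Finset.mem_range] at hu
        omega
      have : ((M-u:ℕ):ℚ) = (M:ℚ) - u := Nat.cast_sub hu'
      rw [this]
      ring
    have bigsum : (∑ u ∈ Finset.range (M+2), ((M+1).choose u : ℚ) * st u (a+1) * st (M+1-u) (b+1))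
        = (∑ u ∈ Finset.range (M+1), (M.choose u : ℚ) * st u a * st (M-u) (b+1))
          + (∑ u ∈ Finset.range (M+1), (M.choose u : ℚ) * st u (a+1) * st (M-u) b)
          - (M:ℚ) * ∑ u ∈ Finset.range (M+1), (M.choose u:ℚ) * st u (a+1) * st (M-u) (b+1) := by
      rw [hpeel, Finset.sum_congr rfl step, Finset.sum_add_distrib, Finset.sum_sub_distrib,
        hshift, Finset.sum_congr rfl step2, Finset.sum_sub_distrib]
      linear_combination -step3
    rw [bigsum, ← ih a (b+1), ← ih (a+1) b, ← ih (a+1) (b+1)]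
    have ha1 : a+1+(b+1) = (a+(b+1))+1 := by omega
    have ha2 : (a+1)+b = a+(b+1) := by omega
    rw [ha1, ha2, st_succ_succ M (a+(b+1))]
    have ePascal : (((a+(b+1))+1).choose (a+1) : ℚ)
        = ((a+(b+1)).choose a : ℚ) + ((a+(b+1)).choose (a+1) : ℚ) := by
      exact_mod_cast congrArg (Nat.cast (R := ℚ)) (Nat.choose_succ_succ (a+(b+1)) a)
    rw [ePascal]
    ring

lemma sum_Icc_range (a b : ℕ) (f : ℕ → ℚ) :
    ∑ m ∈ Finset.Icc a b, f m = ∑ i ∈ Finset.range (b+1-a), f (a+i) := by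
  rw [← Finset.Ico_add_one_right_eq_Icc, Finset.sum_Ico_eq_sum_range]

lemma Icc_to_range (n : ℕ) (f : ℕ → ℚ) :
    ∑ h ∈ Finset.Icc 1 n, f h = ∑ i ∈ Finset.range n, f (i+1) := by
  rw [sum_Icc_range]
  simp only [Nat.add_sub_cancel]
  exact Finset.sum_congr rfl fun i _ => by rw [Nat.add_comm]

lemma range_to_Icc (m : ℕ) (f : ℕ → ℚ) :
    ∑ h ∈ Finset.range (m+1), f h = f 0 + ∑ h ∈ Finset.Icc 1 m, f h := by
  rw [Finset.sum_range_succ' f m, Icc_to_range]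
  ring

lemma Icc_reflect (n : ℕ) (f : ℕ → ℚ) :
    ∑ h ∈ Finset.Icc 1 n, f h = ∑ i ∈ Finset.range n, f (n-i) := by
  rw [Icc_to_range, ← Finset.sum_range_reflect]
  refine Finset.sum_congr rfl fun i hi => ?_
  rw [Finset.mem_range] at hi
  congr 1
  omega

lemma swap_tri (n : ℕ) (A : ℕ → ℕ → ℚ) :
    ∑ h ∈ Finset.Icc 1 n, ∑ m ∈ Finset.Icc h n, A h m
      = ∑ m ∈ Finset.Icc 1 n, ∑ h ∈ Finset.Icc 1 m, A h m := by
  rw [Finset.sum_sigma', Finset.sum_sigma']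
  refine Finset.sum_nbij' (fun p => ⟨p.2, p.1⟩) (fun p => ⟨p.2, p.1⟩) ?_ ?_ ?_ ?_ ?_ <;>
      intro p hp <;>
      simp only [Finset.mem_sigma, Finset.mem_Icc] at * <;>
      first
        | omega
        | rfl

lemma inner_lem (x : ℚ) (ℓ m : ℕ) :
    ∑ h ∈ Finset.Icc 1 m, x^h * (((ℓ+h).factorial : ℚ) / h.factorial) * st (ℓ+m) (ℓ+h)
      = (ℓ.factorial : ℚ) * ∑ u ∈ Finset.Icc 1 m,
          ((ℓ+m).choose u : ℚ) * st (ℓ+m-u) ℓ * ffp u x := by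
  have step1 : ∀ h ∈ Finset.Icc 1 m, x^h * (((ℓ+h).factorial : ℚ) / h.factorial) * st (ℓ+m) (ℓ+h)
      = ∑ u ∈ Finset.range (m+1),
          (ℓ.factorial : ℚ) * ((ℓ+m).choose u : ℚ) * st (ℓ+m-u) ℓ * (st u h * x^h) := by
    intro h hh
    have hp := lemP (ℓ+m) h ℓ
    rw [Nat.add_comm h ℓ] at hp
    have hfac : ((ℓ+h).factorial : ℚ) = ((ℓ+h).choose h : ℚ) * h.factorial * ℓ.factorial := by
      have h1 := Nat.choose_mul_factorial_mul_factorial (Nat.le_add_left h ℓ)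
      rw [Nat.add_sub_cancel] at h1
      exact_mod_cast (congrArg (Nat.cast (R := ℚ)) h1).symm
    have trunc : ∑ u ∈ Finset.range (ℓ+m+1), ((ℓ+m).choose u : ℚ) * st u h * st (ℓ+m-u) ℓ
        = ∑ u ∈ Finset.range (m+1), ((ℓ+m).choose u : ℚ) * st u h * st (ℓ+m-u) ℓ := by
      symm
      apply Finset.sum_subset (Finset.range_subset_range.mpr (by omega))
      intro u hu hnu
      simp only [Finset.mem_range] at hu hnu
      rw [st_eq_zero (ℓ+m-u) ℓ (by omega)]
      ring
    rw [trunc] at hp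
    have hh' : (h.factorial : ℚ) ≠ 0 := Nat.cast_ne_zero.2 (Nat.factorial_ne_zero h)
    calc x^h * (((ℓ+h).factorial : ℚ) / h.factorial) * st (ℓ+m) (ℓ+h)
        = ((ℓ.factorial : ℚ) * x^h) * (((ℓ+h).choose h : ℚ) * st (ℓ+m) (ℓ+h)) := by
          rw [hfac]
          field_simp
      _ = ((ℓ.factorial : ℚ) * x^h) * ∑ u ∈ Finset.range (m+1),
            ((ℓ+m).choose u : ℚ) * st u h * st (ℓ+m-u) ℓ := by rw [hp]
      _ = ∑ u ∈ Finset.range (m+1),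
            (ℓ.factorial : ℚ) * ((ℓ+m).choose u : ℚ) * st (ℓ+m-u) ℓ * (st u h * x^h) := by
          rw [Finset.mul_sum]
          exact Finset.sum_congr rfl fun u hu => by ring
  rw [Finset.sum_congr rfl step1, Finset.sum_comm]
  have step3 : ∀ u ∈ Finset.range (m+1),
      (∑ h ∈ Finset.Icc 1 m, (ℓ.factorial:ℚ) * ((ℓ+m).choose u:ℚ) * st (ℓ+m-u) ℓ * (st u h * x^h))
        = (ℓ.factorial:ℚ) * ((ℓ+m).choose u:ℚ) * st (ℓ+m-u) ℓ * (ffp u x - st u 0) := by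
    intro u hu
    rw [Finset.mem_range] at hu
    rw [← Finset.mul_sum]
    congr 1
    have e5 : ∑ h ∈ Finset.range (m+1), st u h * x^h = ffp u x := by
      rw [← st_poly x u]
      symm
      apply Finset.sum_subset (Finset.range_subset_range.mpr (by omega))
      intro h hh hnh
      simp only [Finset.mem_range] at hh hnh
      rw [st_eq_zero u h (by omega)]
      ring
    have e6 := range_to_Icc m (fun h => st u h * x^h)
    rw [e5] at e6
    simp only [pow_zero, mul_one] at e6
    linarith
  rw [Finset.sum_congr rfl step3,
    range_to_Icc m (fun u => (ℓ.factorial:ℚ) * ((ℓ+m).choose u:ℚ) * st (ℓ+m-u) ℓ * (ffp u x - st u 0))]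
  have hzero : (ℓ.factorial:ℚ) * (((ℓ+m).choose 0 : ℕ):ℚ) * st (ℓ+m-0) ℓ * (ffp 0 x - st 0 0) = 0 := by
    have : ffp 0 x = 1 := by simp [ffp]
    rw [this]
    have : st 0 0 = 1 := rfl
    rw [this]
    ring
  rw [hzero, zero_add, Finset.mul_sum]
  refine Finset.sum_congr rfl fun u hu => ?_
  simp only [Finset.mem_Icc] at hu
  obtain ⟨w, rfl⟩ : ∃ w, u = w+1 := ⟨u-1, by omega⟩
  rw [st_succ_zero]
  ring

lemma ee_shift (ℓ a b : ℕ) : ee (ℓ+b) (ℓ+a)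
    = ∑ m ∈ Finset.Icc a b, (-1:ℚ)^(b-m) * (((ℓ+a).factorial:ℚ) / (ℓ+m).factorial) * st (ℓ+m) (ℓ+a) := by
  rw [ee, sum_Icc_range, sum_Icc_range]
  rw [show ℓ+b+1-(ℓ+a) = b+1-a from by omega]
  refine Finset.sum_congr rfl fun i hi => ?_
  rw [show ℓ+b-(ℓ+a+i) = b-(a+i) from by omega, show ℓ+a+i = ℓ+(a+i) from by omega]

lemma ee_expand (ℓ i : ℕ) : ee (ℓ+i) ℓ
    = ∑ v ∈ Finset.range (i+1), (-1:ℚ)^(i-v) * ((ℓ.factorial:ℚ)/(ℓ+v).factorial) * st (ℓ+v) ℓ := by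
  rw [ee, sum_Icc_range]
  rw [show ℓ+i+1-ℓ = i+1 from by omega]
  refine Finset.sum_congr rfl fun v hv => ?_
  rw [show ℓ+i-(ℓ+v) = i-v from by omega]

noncomputable def Wsum (x : ℚ) (ℓ n : ℕ) : ℚ :=
  ∑ u ∈ Finset.Icc 1 n, ∑ v ∈ Finset.range (n+1-u),
    (-1:ℚ)^(n-u-v) * (ℓ.factorial : ℚ) * ffp u x * st (ℓ+v) ℓ / (u.factorial * (ℓ+v).factorial)

lemma LHS_eq_W (x : ℚ) (ℓ n : ℕ) :
    ∑ h ∈ Finset.Icc 1 n, ee (ℓ+n) (ℓ+h) * x^h / h.factorial = Wsum x ℓ n := by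
  have exp1 : ∀ h ∈ Finset.Icc 1 n, ee (ℓ+n) (ℓ+h) * x^h / h.factorial
      = ∑ m ∈ Finset.Icc h n, ((-1:ℚ)^(n-m) / (ℓ+m).factorial)
          * (x^h * (((ℓ+h).factorial:ℚ) / h.factorial) * st (ℓ+m) (ℓ+h)) := by
    intro h hh
    rw [ee_shift ℓ h n, Finset.sum_mul, Finset.sum_div]
    exact Finset.sum_congr rfl fun m hm => by ring
  rw [Finset.sum_congr rfl exp1, swap_tri]
  have exp2 : ∀ m ∈ Finset.Icc 1 n,
      (∑ h ∈ Finset.Icc 1 m, ((-1:ℚ)^(n-m) / (ℓ+m).factorial)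
          * (x^h * (((ℓ+h).factorial:ℚ) / h.factorial) * st (ℓ+m) (ℓ+h)))
        = ∑ u ∈ Finset.Icc 1 m, ((-1:ℚ)^(n-m) / (ℓ+m).factorial)
            * ((ℓ.factorial : ℚ) * (((ℓ+m).choose u : ℚ) * st (ℓ+m-u) ℓ * ffp u x)) := by
    intro m hm
    rw [← Finset.mul_sum, inner_lem x ℓ m, ← Finset.mul_sum, Finset.mul_sum, Finset.mul_sum]
  rw [Finset.sum_congr rfl exp2, ← swap_tri]
  rw [Wsum]
  refine Finset.sum_congr rfl fun u hu => ?_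
  rw [sum_Icc_range]
  refine Finset.sum_congr rfl fun v hv => ?_
  simp only [Finset.mem_Icc] at hu
  simp only [Finset.mem_range] at hv
  rw [show ℓ+(u+v)-u = ℓ+v from by omega, show n-(u+v) = n-u-v from by omega]
  have e9 : (((ℓ+(u+v)).choose u : ℕ) : ℚ) * u.factorial * (ℓ+v).factorial
      = ((ℓ+(u+v)).factorial : ℚ) := by
    have h1 := Nat.choose_mul_factorial_mul_factorial (show u ≤ ℓ+(u+v) by omega)
    rw [show ℓ+(u+v)-u = ℓ+v from by omega] at h1
    exact_mod_cast congrArg (Nat.cast (R := ℚ)) h1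
  have nz1 : ((ℓ+(u+v)).factorial : ℚ) ≠ 0 := Nat.cast_ne_zero.2 (Nat.factorial_ne_zero _)
  have nz2 : (u.factorial : ℚ) ≠ 0 := Nat.cast_ne_zero.2 (Nat.factorial_ne_zero _)
  have nz3 : ((ℓ+v).factorial : ℚ) ≠ 0 := Nat.cast_ne_zero.2 (Nat.factorial_ne_zero _)
  field_simp
  simp only [← add_assoc] at e9
  linear_combination (norm := ring_nf) (st (ℓ+v) ℓ * ffp u x) * e9

lemma RHS_eq_W (x : ℚ) (ℓ n : ℕ) :
    ∑ h ∈ Finset.Icc 1 n, (ffp (n-h+1) x / (n-h+1).factorial) * ee (ℓ+h-1) ℓ = Wsum x ℓ n := by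
  rw [Icc_reflect n (fun h => (ffp (n-h+1) x / (n-h+1).factorial) * ee (ℓ+h-1) ℓ),
    Wsum, Icc_to_range]
  refine Finset.sum_congr rfl fun i hi => ?_
  simp only [Finset.mem_range] at hi
  rw [show n-(n-i)+1 = i+1 from by omega, show ℓ+(n-i)-1 = ℓ+(n-1-i) from by omega,
    ee_expand ℓ (n-1-i), Finset.mul_sum,
    show n+1-(i+1) = (n-1-i)+1 from by omega]
  refine Finset.sum_congr rfl fun v hv => ?_
  rw [show n-1-i-v = n-(i+1)-v from by omega]
  ring

lemma mainQ (x : ℚ) (ℓ n : ℕ) :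
    ∑ h ∈ Finset.Icc 1 n, ee (ℓ+n) (ℓ+h) * x^h / h.factorial
      = ∑ h ∈ Finset.Icc 1 n, (ffp (n-h+1) x / (n-h+1).factorial) * ee (ℓ+h-1) ℓ :=
  (LHS_eq_W x ℓ n).trans (RHS_eq_W x ℓ n).symm

/-- There is a sequence `(δ_m)` of reals such that for every `j ≥ 1` and `1 ≤ ℓ ≤ j`:
`Σ_{h=1}^{j-ℓ} a^j_{ℓ+h} (-1/k)^h / h! = Σ_{h=1}^{j-ℓ} δ_{j-ℓ-h} a^{ℓ+h-1}_ℓ`. -/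
theorem exists_delta (k : ℕ) (hk : 2 ≤ k) :
    ∃ δ : ℕ → ℝ, ∀ j : ℕ, 1 ≤ j → ∀ ℓ : ℕ, 1 ≤ ℓ → ℓ ≤ j →
      ∑ h ∈ Finset.Icc 1 (j - ℓ),
          (bernCoef j (ℓ + h) : ℝ) * (-1 / (k : ℝ)) ^ h / (Nat.factorial h : ℝ)
        = ∑ h ∈ Finset.Icc 1 (j - ℓ), δ (j - ℓ - h) * (bernCoef (ℓ + h - 1) ℓ : ℝ) := by
  refine ⟨fun m => ((ffp (m+1) (-1/(k:ℚ)) / ((m+1).factorial : ℚ) : ℚ) : ℝ), ?_⟩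
  intro j hj ℓ hℓ hℓj
  obtain ⟨n, rfl⟩ : ∃ n, j = ℓ + n := ⟨j-ℓ, by omega⟩
  have hQ : ∑ h ∈ Finset.Icc 1 n, bernCoef (ℓ+n) (ℓ+h) * (-1/(k:ℚ))^h / h.factorial
      = ∑ h ∈ Finset.Icc 1 n,
          (ffp (n-h+1) (-1/(k:ℚ)) / ((n-h+1).factorial : ℚ)) * bernCoef (ℓ+h-1) ℓ := by
    have c1 : ∀ h ∈ Finset.Icc 1 n,
        bernCoef (ℓ+n) (ℓ+h) * (-1/(k:ℚ))^h / h.factorial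
          = ee (ℓ+n) (ℓ+h) * (-1/(k:ℚ))^h / h.factorial := by
      intro h hh
      simp only [Finset.mem_Icc] at hh
      have hb : bernCoef (ℓ+n) (ℓ+h) = cc ((ℓ+n)+1) ((ℓ+n)-(ℓ+h)) := rfl
      rw [hb, Mp (ℓ+n) (ℓ+h) (by omega)]
    have c2 : ∀ h ∈ Finset.Icc 1 n,
        (ffp (n-h+1) (-1/(k:ℚ)) / ((n-h+1).factorial : ℚ)) * bernCoef (ℓ+h-1) ℓ
          = (ffp (n-h+1) (-1/(k:ℚ)) / ((n-h+1).factorial : ℚ)) * ee (ℓ+h-1) ℓ := by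
      intro h hh
      simp only [Finset.mem_Icc] at hh
      have hb : bernCoef (ℓ+h-1) ℓ = cc ((ℓ+h-1)+1) ((ℓ+h-1)-ℓ) := rfl
      rw [hb, Mp (ℓ+h-1) ℓ (by omega)]
    rw [Finset.sum_congr rfl c1, Finset.sum_congr rfl c2]
    exact mainQ (-1/(k:ℚ)) ℓ n
  simp only [Nat.add_sub_cancel_left]
  have cast := congrArg (fun q : ℚ => (q : ℝ)) hQ
  push_cast at cast ⊢
  exact cast
end

section
/- Let x, ξ : ℝ → ℝ² be differentiable curves solving the Hamilton system ẋ(t) = g₁(x(t)) g₂(x(t)) Aᵀ x(t) and ξ̇(t) = − g₁(x(t)) g₂(x(t)) A ξ(t). Then both t ↦ ⟨x(t), ξ(t)⟩ and t ↦ ⟨x(t), A ξ(t)⟩ are constant in t; in particular, if ⟨x(0), A ξ(0)⟩ = 0 then ⟨x(t), A ξ(t)⟩ = 0 for all t. -/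
open Matrix

/-- The matrix `A = [[μ, 1], [-1, μ]]`. -/
def matA (μ : ℝ) : Matrix (Fin 2) (Fin 2) ℝ := !![μ, 1; -1, μ]

/-- `g₁(x) = |x|² - a²`. -/
def g1 (a : ℝ) (x : Fin 2 → ℝ) : ℝ := x ⬝ᵥ x - a ^ 2

/-- `g₂(x) = b² - |x|²`. -/
def g2 (b : ℝ) (x : Fin 2 → ℝ) : ℝ := b ^ 2 - x ⬝ᵥ x

/-- Along solutions of the Hamilton system `ẋ = g₁g₂ Aᵀx`, `ξ̇ = -g₁g₂ Aξ`,
both `⟨x, ξ⟩` and `⟨x, Aξ⟩` are constant; in particular `⟨x(0), Aξ(0)⟩ = 0`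
implies `⟨x(t), Aξ(t)⟩ = 0` for all `t`. -/
theorem hamilton_invariants (μ a b : ℝ) (hμ : 0 < μ) (ha : 0 < a) (hab : a < b)
    (x ξ : ℝ → Fin 2 → ℝ)
    (hx : ∀ t : ℝ, HasDerivAt x
      ((g1 a (x t) * g2 b (x t)) • ((matA μ)ᵀ.mulVec (x t))) t)
    (hξ : ∀ t : ℝ, HasDerivAt ξ
      (-(g1 a (x t) * g2 b (x t)) • ((matA μ).mulVec (ξ t))) t) :
    (∀ t s : ℝ, x t ⬝ᵥ ξ t = x s ⬝ᵥ ξ s) ∧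
    (∀ t s : ℝ, x t ⬝ᵥ (matA μ).mulVec (ξ t) = x s ⬝ᵥ (matA μ).mulVec (ξ s)) ∧
    (x 0 ⬝ᵥ (matA μ).mulVec (ξ 0) = 0 → ∀ t : ℝ, x t ⬝ᵥ (matA μ).mulVec (ξ t) = 0) := by
  set c : ℝ → ℝ := fun t => g1 a (x t) * g2 b (x t) with hc
  have hx0 : ∀ t, HasDerivAt (fun t => x t 0)
      (c t * (μ * x t 0 + -1 * x t 1)) t := by
    intro t
    refine (hasDerivAt_pi.1 (hx t) 0).congr_deriv ?_
    simp [matA, mulVec, dotProduct, Fin.sum_univ_two, Matrix.transpose, hc]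
  have hx1 : ∀ t, HasDerivAt (fun t => x t 1)
      (c t * (1 * x t 0 + μ * x t 1)) t := by
    intro t
    refine (hasDerivAt_pi.1 (hx t) 1).congr_deriv ?_
    simp [matA, mulVec, dotProduct, Fin.sum_univ_two, Matrix.transpose, hc]
  have hξ0 : ∀ t, HasDerivAt (fun t => ξ t 0)
      (-(c t) * (μ * ξ t 0 + 1 * ξ t 1)) t := by
    intro t
    refine (hasDerivAt_pi.1 (hξ t) 0).congr_deriv ?_
    simp [matA, mulVec, dotProduct, Fin.sum_univ_two, hc]
  have hξ1 : ∀ t, HasDerivAt (fun t => ξ t 1)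
      (-(c t) * (-1 * ξ t 0 + μ * ξ t 1)) t := by
    intro t
    refine (hasDerivAt_pi.1 (hξ t) 1).congr_deriv ?_
    simp [matA, mulVec, dotProduct, Fin.sum_univ_two, hc]
  -- first invariant
  have hF : ∀ t, HasDerivAt (fun t => x t ⬝ᵥ ξ t) 0 t := by
    intro t
    have h2 : HasDerivAt (fun t => x t 0 * ξ t 0 + x t 1 * ξ t 1)
        ((c t * (μ * x t 0 + -1 * x t 1) * ξ t 0 + x t 0 * (-(c t) * (μ * ξ t 0 + 1 * ξ t 1)))
        + (c t * (1 * x t 0 + μ * x t 1) * ξ t 1 + x t 1 * (-(c t) * (-1 * ξ t 0 + μ * ξ t 1)))) t :=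
      ((hx0 t).mul (hξ0 t)).add ((hx1 t).mul (hξ1 t))
    have : (fun t => x t ⬝ᵥ ξ t) = (fun t => x t 0 * ξ t 0 + x t 1 * ξ t 1) := by
      funext t; simp [dotProduct, Fin.sum_univ_two]
    rw [this]
    convert h2 using 1
    ring
  have hG : ∀ t, HasDerivAt (fun t => x t ⬝ᵥ (matA μ).mulVec (ξ t)) 0 t := by
    intro t
    have h2 : HasDerivAt (fun t => x t 0 * (μ * ξ t 0 + 1 * ξ t 1)
        + x t 1 * (-1 * ξ t 0 + μ * ξ t 1))
        ((c t * (μ * x t 0 + -1 * x t 1) * (μ * ξ t 0 + 1 * ξ t 1)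
          + x t 0 * (μ * (-(c t) * (μ * ξ t 0 + 1 * ξ t 1)) + 1 * (-(c t) * (-1 * ξ t 0 + μ * ξ t 1))))
        + (c t * (1 * x t 0 + μ * x t 1) * (-1 * ξ t 0 + μ * ξ t 1)
          + x t 1 * (-1 * (-(c t) * (μ * ξ t 0 + 1 * ξ t 1)) + μ * (-(c t) * (-1 * ξ t 0 + μ * ξ t 1))))) t := by
      exact ((hx0 t).mul (((hξ0 t).const_mul μ).add ((hξ1 t).const_mul 1))).add
        ((hx1 t).mul (((hξ0 t).const_mul (-1)).add ((hξ1 t).const_mul μ)))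
    have heq : (fun t => x t ⬝ᵥ (matA μ).mulVec (ξ t))
        = (fun t => x t 0 * (μ * ξ t 0 + 1 * ξ t 1) + x t 1 * (-1 * ξ t 0 + μ * ξ t 1)) := by
      funext t; simp [matA, mulVec, dotProduct, Fin.sum_univ_two]
    rw [heq]
    convert h2 using 1
    ring
  have hFc : ∀ t s : ℝ, x t ⬝ᵥ ξ t = x s ⬝ᵥ ξ s := fun t s =>
    is_const_of_deriv_eq_zero (fun u => (hF u).differentiableAt) (fun u => (hF u).deriv) t s
  have hGc : ∀ t s : ℝ, x t ⬝ᵥ (matA μ).mulVec (ξ t) = x s ⬝ᵥ (matA μ).mulVec (ξ s) := fun t s =>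
    is_const_of_deriv_eq_zero (fun u => (hG u).differentiableAt) (fun u => (hG u).deriv) t s
  exact ⟨hFc, hGc, fun h0 t => (hGc t 0).trans h0⟩
end

section
/- Let x, ξ : ℝ → ℝ² be differentiable curves solving the Hamilton system ẋ(t) = g₁(x(t)) g₂(x(t)) Aᵀ x(t) and ξ̇(t) = − g₁(x(t)) g₂(x(t)) A ξ(t). Then for all t: (1/2) d/dt |x(t)|² = μ g₁(x(t)) g₂(x(t)) |x(t)|² and (1/2) d/dt |ξ(t)|² = − μ g₁(x(t)) g₂(x(t)) |ξ(t)|². Moreover, if a < |x(0)| < b, then a < |x(t)| < b for all t ∈ ℝ and t ↦ |x(t)|² is monotone nondecreasing, while every x₀ with |x₀| = a or |x₀| = b gives a stationary solution x(t) ≡ x₀. -/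
open Matrix

lemma dot_nonneg' (y : Fin 2 → ℝ) : 0 ≤ y ⬝ᵥ y :=
  Finset.sum_nonneg fun _ _ => mul_self_nonneg _

lemma hasDerivAt_dot {y : ℝ → Fin 2 → ℝ} {v : Fin 2 → ℝ} {t : ℝ} (h : HasDerivAt y v t) :
    HasDerivAt (fun s => y s ⬝ᵥ y s) (2 * (y t ⬝ᵥ v)) t := by
  have h0 := (hasDerivAt_pi.mp h) 0
  have h1 := (hasDerivAt_pi.mp h) 1
  have h2 := (h0.mul h0).add (h1.mul h1)
  simp only [dotProduct, Fin.sum_univ_two]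
  refine h2.congr_deriv ?_
  ring

lemma pos_of_linODE {u c : ℝ → ℝ} (hc : Continuous c)
    (hu : ∀ t, HasDerivAt u (c t * u t) t) (h0 : 0 < u 0) : ∀ t, 0 < u t := by
  set C : ℝ → ℝ := fun t => ∫ s in (0:ℝ)..t, c s with hCdef
  have hC : ∀ t, HasDerivAt C (c t) t := fun t => (hc.integral_hasStrictDerivAt 0 t).hasDerivAt
  set φ : ℝ → ℝ := fun t => u t * Real.exp (-C t) with hφdef
  have hφ : ∀ t, HasDerivAt φ 0 t := by
    intro t
    have h1 := (hu t).mul ((hC t).neg.exp)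
    refine h1.congr_deriv ?_
    ring
  have hconst : ∀ t, φ t = φ 0 :=
    fun t => is_const_of_deriv_eq_zero (fun s => (hφ s).differentiableAt) (fun s => (hφ s).deriv) t 0
  intro t
  have h2 : u t * Real.exp (-C t) = u 0 := by
    have := hconst t
    simp only [hφdef, hCdef] at this ⊢
    simpa using this
  have he := Real.exp_pos (-C t)
  nlinarith

/-- Along solutions of the Hamilton system: `(1/2) d/dt |x|² = μ g₁ g₂ |x|²` and
`(1/2) d/dt |ξ|² = -μ g₁ g₂ |ξ|²`; if `a < |x(0)| < b` then `a < |x(t)| < b` for all `t`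
and `t ↦ |x(t)|²` is monotone nondecreasing; and every `x₀` with `|x₀| = a` or `|x₀| = b`
gives a stationary solution `x(t) ≡ x₀`. -/
theorem hamilton_radial (μ a b : ℝ) (hμ : 0 < μ) (ha : 0 < a) (hab : a < b)
    (x ξ : ℝ → Fin 2 → ℝ)
    (hx : ∀ t : ℝ, HasDerivAt x
      ((g1 a (x t) * g2 b (x t)) • ((matA μ)ᵀ.mulVec (x t))) t)
    (hξ : ∀ t : ℝ, HasDerivAt ξ
      (-(g1 a (x t) * g2 b (x t)) • ((matA μ).mulVec (ξ t))) t) :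
    (∀ t : ℝ, HasDerivAt (fun s => (1 / 2 : ℝ) * (x s ⬝ᵥ x s))
      (μ * g1 a (x t) * g2 b (x t) * (x t ⬝ᵥ x t)) t) ∧
    (∀ t : ℝ, HasDerivAt (fun s => (1 / 2 : ℝ) * (ξ s ⬝ᵥ ξ s))
      (-(μ * g1 a (x t) * g2 b (x t) * (ξ t ⬝ᵥ ξ t))) t) ∧
    ((a < Real.sqrt (x 0 ⬝ᵥ x 0) ∧ Real.sqrt (x 0 ⬝ᵥ x 0) < b) →
      (∀ t : ℝ, a < Real.sqrt (x t ⬝ᵥ x t) ∧ Real.sqrt (x t ⬝ᵥ x t) < b) ∧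
      Monotone fun t => x t ⬝ᵥ x t) ∧
    (∀ x₀ : Fin 2 → ℝ, (Real.sqrt (x₀ ⬝ᵥ x₀) = a ∨ Real.sqrt (x₀ ⬝ᵥ x₀) = b) →
      ∀ t : ℝ, HasDerivAt (fun _ : ℝ => x₀)
        ((g1 a x₀ * g2 b x₀) • ((matA μ)ᵀ.mulVec x₀)) t) := by
  set r : ℝ → ℝ := fun t => x t ⬝ᵥ x t with hrdef
  -- part 1
  have part1 : ∀ t : ℝ, HasDerivAt (fun s => (1 / 2 : ℝ) * (x s ⬝ᵥ x s))
      (μ * g1 a (x t) * g2 b (x t) * (x t ⬝ᵥ x t)) t := by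
    intro t
    have h := (hasDerivAt_dot (hx t)).const_mul (1 / 2 : ℝ)
    refine h.congr_deriv ?_
    simp only [dotProduct, Fin.sum_univ_two, matA, Matrix.mulVec, Matrix.transpose_apply,
      Matrix.cons_val_zero, Matrix.cons_val_one, Matrix.head_cons, Pi.smul_apply,
      smul_eq_mul, Matrix.cons_val', Matrix.empty_val', Matrix.cons_val_fin_one,
      Matrix.head_fin_const, Matrix.of_apply]
    norm_num
    ring
  -- part 2
  have part2 : ∀ t : ℝ, HasDerivAt (fun s => (1 / 2 : ℝ) * (ξ s ⬝ᵥ ξ s))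
      (-(μ * g1 a (x t) * g2 b (x t) * (ξ t ⬝ᵥ ξ t))) t := by
    intro t
    have h := (hasDerivAt_dot (hξ t)).const_mul (1 / 2 : ℝ)
    refine h.congr_deriv ?_
    simp only [dotProduct, Fin.sum_univ_two, matA, Matrix.mulVec, Matrix.transpose_apply,
      Matrix.cons_val_zero, Matrix.cons_val_one, Matrix.head_cons, Pi.smul_apply,
      smul_eq_mul, Matrix.cons_val', Matrix.empty_val', Matrix.cons_val_fin_one,
      Matrix.head_fin_const, Pi.neg_apply, neg_mul, Matrix.of_apply]
    norm_num
    ring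
  -- derivative of r in polynomial form
  have hr : ∀ t, HasDerivAt r (2 * μ * (r t - a ^ 2) * (b ^ 2 - r t) * r t) t := by
    intro t
    have h := (part1 t).const_mul (2 : ℝ)
    have heq : (fun s => (2 : ℝ) * ((1 / 2 : ℝ) * (x s ⬝ᵥ x s))) = r := by
      funext s
      show 2 * (1 / 2 * (x s ⬝ᵥ x s)) = x s ⬝ᵥ x s
      ring
    rw [heq] at h
    refine h.congr_deriv ?_
    simp only [g1, g2, hrdef]
    ring
  have hrc : Continuous r := by
    have : Differentiable ℝ r := fun t => (hr t).differentiableAt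
    exact this.continuous
  refine ⟨part1, part2, ?_, ?_⟩
  · rintro ⟨h0a, h0b⟩
    have h0nn : 0 ≤ r 0 := dot_nonneg' _
    have ha2 : a ^ 2 < r 0 := (Real.lt_sqrt ha.le).mp h0a
    have hb2 : r 0 < b ^ 2 := (Real.sqrt_lt' (ha.trans hab)).mp h0b
    -- u = r - a², positive
    have hu : ∀ t, 0 < r t - a ^ 2 := by
      apply pos_of_linODE (c := fun t => 2 * μ * (b ^ 2 - r t) * r t)
      · fun_prop
      · intro t
        have := (hr t).sub_const (a ^ 2)
        refine this.congr_deriv ?_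
        ring
      · simpa using ha2
    -- v = b² - r, positive
    have hv : ∀ t, 0 < b ^ 2 - r t := by
      apply pos_of_linODE (c := fun t => -(2 * μ * (r t - a ^ 2) * r t))
      · fun_prop
      · intro t
        have := (hr t).const_sub (b ^ 2)
        refine this.congr_deriv ?_
        ring
      · simpa using hb2
    constructor
    · intro t
      have h1 := hu t
      have h2 := hv t
      have hnn : 0 ≤ r t := dot_nonneg' _
      constructor
      · exact (Real.lt_sqrt ha.le).mpr (by linarith)
      · exact (Real.sqrt_lt' (ha.trans hab)).mpr (by linarith)
    · apply monotone_of_deriv_nonneg (fun t => (hr t).differentiableAt)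
      intro t
      rw [(hr t).deriv]
      have h1 := hu t
      have h2 := hv t
      have hnn : 0 ≤ r t := dot_nonneg' _
      exact mul_nonneg (mul_nonneg (mul_nonneg (by linarith) h1.le) h2.le) hnn
  · rintro x₀ (h | h) t
    · have hd : x₀ ⬝ᵥ x₀ = a ^ 2 := by
        rw [← Real.sq_sqrt (dot_nonneg' x₀), h]
      have : g1 a x₀ = 0 := by simp [g1, hd]
      simpa [this] using hasDerivAt_const t x₀
    · have hd : x₀ ⬝ᵥ x₀ = b ^ 2 := by
        rw [← Real.sq_sqrt (dot_nonneg' x₀), h]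
      have : g2 b x₀ = 0 := by simp [g2, hd]
      simpa [this] using hasDerivAt_const t x₀
end
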